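/- Let C ≥ 1, α > 1, β > 2, κ > 3 be real numbers and let λ > 0 be sufficiently small (depending on C, α, β, κ). Set a = 2C/λ and A = 30C. Then there exists ε > 0 such that: if f : [0,∞) → [0,∞) is continuous and satisfies f(t) + λ ∫_τ^t f ≤ C(1 + λ^α (t−τ)) f(τ) + C(λ² + λ^β (t−τ) + λ^κ (t−τ)²) ∫_τ^t f for all 0 ≤ τ ≤ t, and f(0) ≤ ε, then f(t) ≤ A ε e^{−t/a} for all t ≥ 0. -/

import Mathlib

open Real MeasureTheory Filter

lemma window_decay {g : ℝ → ℝ} (hg : Continuous g)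
    {τ t lam' K : ℝ} (hK : 0 < K) (hlam' : 0 < lam') (hτt : τ ≤ t)
    (H : ∀ s, τ ≤ s → s ≤ t → g t + lam' * (∫ x in s..t, g x) ≤ K * g s) :
    g t ≤ K * g τ * Real.exp (-(lam' / K) * (t - τ)) := by
  set c := lam' / K with hc
  have hc0 : 0 < c := div_pos hlam' hK
  set Φ : ℝ → ℝ := fun s => ∫ x in s..t, g x with hΦ
  have hΦderiv : ∀ s : ℝ, HasDerivAt Φ (-g s) s := by
    intro s
    exact intervalIntegral.integral_hasDerivAt_left
      (hg.intervalIntegrable s t) (hg.stronglyMeasurableAtFilter _ _)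
      hg.continuousAt
  set ψ : ℝ → ℝ := fun s => Real.exp (c * s) * (lam' * Φ s + g t) with hψ
  have hψderiv : ∀ s : ℝ, HasDerivAt ψ
      (Real.exp (c * s) * (c * (lam' * Φ s + g t) - lam' * g s)) s := by
    intro s
    have h1 : HasDerivAt (fun u : ℝ => Real.exp (c * u)) (Real.exp (c * s) * c) s := by
      have h0 : HasDerivAt (fun u : ℝ => c * u) c s := by
        simpa using (hasDerivAt_id s).const_mul c
      exact h0.exp
    have h2 : HasDerivAt (fun u : ℝ => lam' * Φ u + g t) (lam' * (-g s)) s :=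
      ((hΦderiv s).const_mul lam').add_const (g t)
    have := h1.mul h2
    refine this.congr_deriv ?_
    ring
  have hanti : AntitoneOn ψ (Set.Icc τ t) := by
    apply antitoneOn_of_deriv_nonpos (convex_Icc τ t)
    · exact fun s _ => (hψderiv s).continuousAt.continuousWithinAt
    · exact fun s _ => ((hψderiv s).differentiableAt).differentiableWithinAt
    · intro s hs
      rw [interior_Icc] at hs
      rw [(hψderiv s).deriv]
      have hH := H s hs.1.le hs.2.le
      have hle : c * (lam' * Φ s + g t) ≤ lam' * g s := by
        rw [hc, div_mul_eq_mul_div, div_le_iff₀ hK]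
        nlinarith [hH]
      have hexp : (0:ℝ) < Real.exp (c * s) := Real.exp_pos _
      nlinarith
  have h1 : ψ t ≤ ψ τ := hanti (Set.left_mem_Icc.2 hτt) (Set.right_mem_Icc.2 hτt) hτt
  have hΦt : Φ t = 0 := intervalIntegral.integral_same
  have hHτ : g t + lam' * Φ τ ≤ K * g τ := H τ le_rfl hτt
  have key : g t * Real.exp (c * t) ≤ K * g τ * Real.exp (c * τ) := by
    have e1 : Real.exp (c * t) * (lam' * Φ t + g t) ≤ Real.exp (c * τ) * (lam' * Φ τ + g t) := h1
    rw [hΦt] at e1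
    have hexpτ : (0:ℝ) < Real.exp (c * τ) := Real.exp_pos _
    nlinarith
  have hexpt : (0:ℝ) < Real.exp (c * t) := Real.exp_pos _
  rw [show -c * (t - τ) = c * τ - c * t by ring, Real.exp_sub, ← mul_div_assoc, le_div_iff₀ hexpt]
  exact key

set_option maxHeartbeats 1000000 in
theorem stmt_0 (C α β κ : ℝ) (hC : 1 ≤ C) (hα : 1 < α) (hβ : 2 < β) (hκ : 3 < κ) :
    ∃ lam₀ > (0:ℝ), ∀ lam : ℝ, 0 < lam → lam ≤ lam₀ →
      ∃ ε > (0:ℝ), ∀ f : ℝ → ℝ,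
        ContinuousOn f (Set.Ici 0) →
        (∀ s, 0 ≤ s → 0 ≤ f s) →
        (∀ τ t : ℝ, 0 ≤ τ → τ ≤ t →
          f t + lam * (∫ s in Set.Icc τ t, f s)
            ≤ C * (1 + lam ^ α * (t - τ)) * f τ
              + C * (lam ^ (2:ℝ) + lam ^ β * (t - τ) + lam ^ κ * (t - τ)^2)
                * (∫ s in Set.Icc τ t, f s)) →
        f 0 ≤ ε →
        ∀ t : ℝ, 0 ≤ t → f t ≤ 30 * C * ε * Real.exp (-t / (2 * C / lam)) := by
  have hC0 : (0:ℝ) < C := lt_of_lt_of_le one_pos hC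
  set m : ℝ := min α (min (β-1) ((κ-1)/2)) with hm
  have hm1 : 1 < m := by
    rw [hm]
    refine lt_min hα (lt_min (by linarith) (by linarith))
  set sb : ℝ := (1+m)/2 with hsb
  have hsb1 : 1 < sb := by rw [hsb]; linarith
  have hsbm : sb < m := by rw [hsb]; linarith
  have hsα : sb < α := lt_of_lt_of_le hsbm (min_le_left _ _)
  have hsβ : sb < β - 1 := lt_of_lt_of_le hsbm ((min_le_right _ _).trans (min_le_left _ _))
  have hsκ : sb < (κ-1)/2 := lt_of_lt_of_le hsbm ((min_le_right _ _).trans (min_le_right _ _))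
  have hL0 : 0 < Real.log (11*C/10) := Real.log_pos (by linarith)
  -- eventual smallness of rpow
  have evp : ∀ e δ : ℝ, 0 < e → 0 < δ → ∀ᶠ l in nhdsWithin (0:ℝ) (Set.Ioi 0), l ^ e < δ := by
    intro e δ he hδ
    have hcont : ContinuousAt (fun x : ℝ => x ^ e) 0 :=
      Real.continuousAt_rpow_const 0 e (Or.inr he.le)
    have h0 : (0:ℝ) ^ e = 0 := Real.zero_rpow (ne_of_gt he)
    have htend : Tendsto (fun x : ℝ => x ^ e) (nhdsWithin (0:ℝ) (Set.Ioi 0)) (nhds 0) := by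
      have := hcont.tendsto
      rw [h0] at this
      exact this.mono_left nhdsWithin_le_nhds
    exact htend.eventually_lt_const hδ
  have evid : Tendsto (fun x : ℝ => x) (nhdsWithin (0:ℝ) (Set.Ioi 0)) (nhds 0) :=
    tendsto_id.mono_left nhdsWithin_le_nhds
  have ev1 := evp (α - sb) (1/10) (by linarith) (by norm_num)
  have ev2 : ∀ᶠ l in nhdsWithin (0:ℝ) (Set.Ioi 0), l < 1/(30*C) :=
    evid.eventually_lt_const (by positivity)
  have ev3 := evp (β - sb - 1) (1/(30*C)) (by linarith) (by positivity)
  have ev4 := evp (κ - 2*sb - 1) (1/(30*C)) (by linarith) (by positivity)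
  have ev5 := evp (sb - 1) ((7/(22*C)) / Real.log (11*C/10)) (by linarith) (by positivity)
  have hall := ((ev1.and ev2).and ((ev3.and ev4).and ev5))
  rw [Filter.eventually_iff, mem_nhdsGT_iff_exists_Ioc_subset] at hall
  obtain ⟨u, hu, hsub⟩ := hall
  refine ⟨u, hu, ?_⟩
  intro lam hlam hlamle
  obtain ⟨⟨c1, c2⟩, ⟨c3, c4⟩, c5⟩ := hsub ⟨hlam, hlamle⟩
  -- setup constants
  set T : ℝ := lam ^ (-sb) with hT
  have hT0 : 0 < T := Real.rpow_pos_of_pos hlam _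
  set K : ℝ := 11*C/10 with hK
  have hK0 : 0 < K := by rw [hK]; linarith
  set lam' : ℝ := 9*lam/10 with hlam'def
  have hlam'0 : 0 < lam' := by rw [hlam'def]; linarith
  set d : ℝ := lam/(2*C) with hd
  have hd0 : 0 < d := by positivity
  have hcval : lam' / K = 9*lam/(11*C) := by
    rw [hlam'def, hK]; field_simp
  have hdc : d ≤ lam' / K := by
    rw [hcval, hd]
    rw [div_le_div_iff₀ (by linarith) (by linarith)]
    nlinarith [mul_pos hlam hC0]
  -- rpow identities
  have idα : lam ^ α * T = lam ^ (α - sb) := by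
    rw [hT, ← Real.rpow_add hlam, ← sub_eq_add_neg]
  have idβ : lam ^ β * T = lam * lam ^ (β - sb - 1) := by
    rw [hT, ← Real.rpow_add hlam, show β + -sb = 1 + (β - sb - 1) by ring,
      Real.rpow_add hlam, Real.rpow_one]
  have idκ : lam ^ κ * T^2 = lam * lam ^ (κ - 2*sb - 1) := by
    rw [hT, sq, ← Real.rpow_add hlam, ← Real.rpow_add hlam,
      show κ + (-sb + -sb) = 1 + (κ - 2*sb - 1) by ring, Real.rpow_add hlam, Real.rpow_one]
  have id2 : lam ^ (2:ℝ) = lam * lam := by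
    rw [show (2:ℝ) = (1:ℝ)+1 by norm_num, Real.rpow_add hlam, Real.rpow_one]
  -- window conditions
  have cond2 : lam ^ α * T ≤ 1/10 := by rw [idα]; exact c1.le
  have cond3 : C * lam ^ (2:ℝ) ≤ lam/30 := by
    rw [id2]
    have hCdiv : C * (1/(30*C)) = 1/30 := by
      rw [mul_one_div, div_eq_div_iff (by positivity) (by norm_num)]; ring
    have h := mul_lt_mul_of_pos_left c2 hC0
    rw [hCdiv] at h
    nlinarith [mul_le_mul_of_nonneg_right h.le hlam.le]
  have cond4 : C * (lam ^ β * T) ≤ lam/30 := by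
    rw [idβ]
    have h1 : C * lam ^ (β - sb - 1) ≤ 1/30 := by
      have hCdiv : C * (1/(30*C)) = 1/30 := by
        rw [mul_one_div, div_eq_div_iff (by positivity) (by norm_num)]; ring
      have h := mul_lt_mul_of_pos_left c3 hC0
      rw [hCdiv] at h
      linarith
    nlinarith [mul_le_mul_of_nonneg_right h1 hlam.le]
  have cond5 : C * (lam ^ κ * T^2) ≤ lam/30 := by
    rw [idκ]
    have h1 : C * lam ^ (κ - 2*sb - 1) ≤ 1/30 := by
      have hCdiv : C * (1/(30*C)) = 1/30 := by
        rw [mul_one_div, div_eq_div_iff (by positivity) (by norm_num)]; ring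
      have h := mul_lt_mul_of_pos_left c4 hC0
      rw [hCdiv] at h
      linarith
    nlinarith [mul_le_mul_of_nonneg_right h1 hlam.le]
  -- decay condition: log K ≤ (7 lam/(22 C)) * T
  have cond6 : Real.log K ≤ 7*lam/(22*C) * T := by
    have hLK : Real.log K = Real.log (11*C/10) := by rw [hK]
    have hp1 : (0:ℝ) < lam ^ (1-sb) := Real.rpow_pos_of_pos hlam _
    have e5 : lam ^ (sb-1) * Real.log (11*C/10) < 7/(22*C) :=
      (lt_div_iff₀ hL0).1 c5
    have hprod : lam ^ (sb-1) * lam ^ (1-sb) = 1 := by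
      rw [← Real.rpow_add hlam]; norm_num
    have hmul := mul_lt_mul_of_pos_right e5 hp1
    rw [mul_comm (lam ^ (sb-1)) (Real.log (11*C/10)), mul_assoc, hprod, mul_one] at hmul
    have hTeq : 7*lam/(22*C) * T = 7/(22*C) * lam ^ (1-sb) := by
      rw [hT, show (1:ℝ)-sb = 1 + -sb by ring, Real.rpow_add hlam, Real.rpow_one]
      ring
    rw [hLK, hTeq]
    exact hmul.le
  -- now the function
  refine ⟨1, one_pos, ?_⟩
  intro f hfc hfnn hfineq hf0
  set g : ℝ → ℝ := fun s => f (max s 0) with hgdef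
  have hg : Continuous g :=
    hfc.comp_continuous (continuous_id.max continuous_const) (fun x => le_max_right x 0)
  have hgnn : ∀ s, 0 ≤ g s := fun s => hfnn _ (le_max_right _ _)
  have hgf : ∀ s, 0 ≤ s → g s = f s := by
    intro s hs; rw [hgdef]; simp [max_eq_left hs]
  have hgH : ∀ τ t : ℝ, 0 ≤ τ → τ ≤ t →
      g t + lam * (∫ x in Set.Icc τ t, g x)
        ≤ C * (1 + lam ^ α * (t - τ)) * g τ
          + C * (lam ^ (2:ℝ) + lam ^ β * (t - τ) + lam ^ κ * (t - τ)^2)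
            * (∫ x in Set.Icc τ t, g x) := by
    intro τ t hτ hτt
    have hIeq : (∫ x in Set.Icc τ t, g x) = ∫ x in Set.Icc τ t, f x :=
      setIntegral_congr_fun measurableSet_Icc (fun x hx => hgf x (le_trans hτ hx.1))
    rw [hIeq, hgf t (hτ.trans hτt), hgf τ hτ]
    exact hfineq τ t hτ hτt
  -- window step
  have stepB : ∀ n : ℕ, ∀ t : ℝ, (n:ℝ)*T ≤ t → t ≤ ((n:ℝ)+1)*T →
      g t ≤ K * g ((n:ℝ)*T) * Real.exp (-(lam'/K)*(t - (n:ℝ)*T)) := by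
    intro n t hnt ht
    have hτ0 : (0:ℝ) ≤ (n:ℝ)*T := by positivity
    apply window_decay hg hK0 hlam'0 hnt
    intro s hs1 hs2
    have h0s : (0:ℝ) ≤ s := hτ0.trans hs1
    have hI : (∫ x in Set.Icc s t, g x) = ∫ x in s..t, g x := by
      rw [intervalIntegral.integral_of_le hs2, MeasureTheory.integral_Icc_eq_integral_Ioc]
    have hInn : 0 ≤ ∫ x in s..t, g x :=
      intervalIntegral.integral_nonneg hs2 (fun x _ => hgnn x)
    have hΔ1 : t - s ≤ T := by linarith
    have hΔ0 : 0 ≤ t - s := by linarith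
    have hmain := hgH s t h0s hs2
    rw [hI] at hmain
    have b1 : C * (1 + lam ^ α * (t - s)) * g s ≤ K * g s := by
      apply mul_le_mul_of_nonneg_right _ (hgnn s)
      have h1 : lam ^ α * (t-s) ≤ lam ^ α * T :=
        mul_le_mul_of_nonneg_left hΔ1 (Real.rpow_nonneg hlam.le α)
      rw [hK]
      have h2 := mul_le_mul_of_nonneg_left (h1.trans cond2) hC0.le
      linarith
    have b2 : C * (lam ^ (2:ℝ) + lam ^ β * (t-s) + lam ^ κ * (t-s)^2) * (∫ x in s..t, g x)
        ≤ (lam/10) * (∫ x in s..t, g x) := by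
      apply mul_le_mul_of_nonneg_right _ hInn
      have h1 : lam ^ β * (t-s) ≤ lam ^ β * T :=
        mul_le_mul_of_nonneg_left hΔ1 (Real.rpow_nonneg hlam.le β)
      have h2 : lam ^ κ * (t-s)^2 ≤ lam ^ κ * T^2 := by
        exact mul_le_mul_of_nonneg_left (pow_le_pow_left₀ hΔ0 hΔ1 2) (Real.rpow_nonneg hlam.le κ)
      have h3 := mul_le_mul_of_nonneg_left h1 hC0.le
      have h4 := mul_le_mul_of_nonneg_left h2 hC0.le
      linarith [cond3, cond4, cond5]
    rw [hlam'def]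
    linarith
  -- induction
  have ind : ∀ n : ℕ, g ((n:ℝ)*T) ≤ Real.exp (-d * ((n:ℝ)*T)) := by
    intro n
    induction n with
    | zero =>
      simp only [Nat.cast_zero, zero_mul, mul_zero, neg_zero, Real.exp_zero]
      rw [hgf 0 le_rfl]
      exact hf0
    | succ n ih =>
      have h1 := stepB n (((n:ℝ)+1)*T) (by linarith [hT0.le]) le_rfl
      rw [show ((n:ℝ)+1)*T - (n:ℝ)*T = T by ring] at h1
      have hKexp : K * Real.exp (-(lam'/K)*T) ≤ Real.exp (-d*T) := by
        have hKlog : K ≤ Real.exp ((lam'/K - d)*T) := by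
          have hcd : lam'/K - d = 7*lam/(22*C) := by
            rw [hcval, hd]; field_simp; ring
          rw [hcd]
          calc K = Real.exp (Real.log K) := (Real.exp_log hK0).symm
            _ ≤ Real.exp (7*lam/(22*C)*T) := Real.exp_le_exp.2 cond6
        calc K * Real.exp (-(lam'/K)*T)
            ≤ Real.exp ((lam'/K - d)*T) * Real.exp (-(lam'/K)*T) :=
              mul_le_mul_of_nonneg_right hKlog (Real.exp_pos _).le
          _ = Real.exp (-d*T) := by rw [← Real.exp_add]; ring_nf
      have h2 : K * g ((n:ℝ)*T) * Real.exp (-(lam'/K)*T)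
          ≤ Real.exp (-d*T) * Real.exp (-d*((n:ℝ)*T)) := by
        calc K * g ((n:ℝ)*T) * Real.exp (-(lam'/K)*T)
            = (K * Real.exp (-(lam'/K)*T)) * g ((n:ℝ)*T) := by ring
          _ ≤ Real.exp (-d*T) * Real.exp (-d*((n:ℝ)*T)) :=
              mul_le_mul hKexp ih (hgnn _) (Real.exp_pos _).le
      push_cast
      calc g (((n:ℝ)+1)*T) ≤ K * g ((n:ℝ)*T) * Real.exp (-(lam'/K)*T) := h1
        _ ≤ Real.exp (-d*T) * Real.exp (-d*((n:ℝ)*T)) := h2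
        _ = Real.exp (-d * (((n:ℝ)+1)*T)) := by rw [← Real.exp_add]; ring_nf
  -- conclusion
  intro t ht
  set n : ℕ := ⌊t/T⌋₊ with hn
  have h1 : (n:ℝ)*T ≤ t := by
    rw [← le_div_iff₀ hT0]
    exact Nat.floor_le (div_nonneg ht hT0.le)
  have h2 : t ≤ ((n:ℝ)+1)*T := by
    have := Nat.lt_floor_add_one (t/T)
    rw [div_lt_iff₀ hT0] at this
    exact this.le
  have e1 := stepB n t h1 h2
  have e2 := ind n
  have e3 : Real.exp (-(lam'/K)*(t - (n:ℝ)*T)) ≤ Real.exp (-d*(t - (n:ℝ)*T)) := by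
    apply Real.exp_le_exp.2
    nlinarith [mul_nonneg (sub_nonneg.2 hdc) (sub_nonneg.2 h1)]
  have e4 : K * g ((n:ℝ)*T) * Real.exp (-(lam'/K)*(t - (n:ℝ)*T))
      ≤ K * Real.exp (-d*((n:ℝ)*T)) * Real.exp (-d*(t - (n:ℝ)*T)) :=
    mul_le_mul (mul_le_mul_of_nonneg_left e2 hK0.le) e3 (Real.exp_pos _).le (by positivity)
  have e5 : K * Real.exp (-d*((n:ℝ)*T)) * Real.exp (-d*(t - (n:ℝ)*T))
      = K * Real.exp (-d*t) := by
    rw [mul_assoc, ← Real.exp_add]; ring_nf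
  have e6 : g t ≤ K * Real.exp (-d*t) := by
    calc g t ≤ K * g ((n:ℝ)*T) * Real.exp (-(lam'/K)*(t - (n:ℝ)*T)) := e1
      _ ≤ K * Real.exp (-d*((n:ℝ)*T)) * Real.exp (-d*(t - (n:ℝ)*T)) := e4
      _ = K * Real.exp (-d*t) := e5
  have hdiv : -t / (2*C/lam) = -d * t := by
    rw [hd]; field_simp
  rw [← hgf t ht, hdiv, mul_one]
  calc g t ≤ K * Real.exp (-d*t) := e6
    _ ≤ 30 * C * Real.exp (-d*t) := by
        apply mul_le_mul_of_nonneg_right _ (Real.exp_pos _).le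
        rw [hK]; linarith
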